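/- The secular determinant satisfies D(k²) = (1/2π) · 1/(Γ̃(ik) Γ̃(-ik)) for all k ∈ ℂ, where Γ̃ is the generalized gamma function. -/

import Mathlib

open Filter

/- ### Auxiliary lemmas -/

lemma card_divisors_le_aux (m : ℕ) : (Nat.divisors m).card ≤ 2 * Nat.sqrt m := by
  rcases eq_or_ne m 0 with rfl | hm
  · simp
  set s := Nat.sqrt m with hs
  have hsub : m.divisors ⊆ (m.divisors.filter (· ≤ s)) ∪
      ((m.divisors.filter (· ≤ s)).image (m / ·)) := by
    intro a ha
    rcases le_or_gt a s with h | h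
    · exact Finset.mem_union_left _ (Finset.mem_filter.2 ⟨ha, h⟩)
    · refine Finset.mem_union_right _ (Finset.mem_image.2 ⟨m / a, ?_, ?_⟩)
      · refine Finset.mem_filter.2 ⟨Nat.mem_divisors.2
          ⟨Nat.div_dvd_of_dvd (Nat.mem_divisors.1 ha).1, hm⟩, ?_⟩
        have h1 : m / a ≤ m / (s + 1) := Nat.div_le_div_left h (Nat.succ_pos s)
        have h2 : m / (s + 1) ≤ s := by
          by_contra hc
          push_neg at hc
          have h3 := Nat.lt_succ_sqrt m
          rw [← hs] at h3
          have := (Nat.le_div_iff_mul_le (Nat.succ_pos s)).1 hc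
          omega
        omega
      · exact Nat.div_div_self (Nat.mem_divisors.1 ha).1 hm
  have hcard : (m.divisors.filter (· ≤ s)).card ≤ s := by
    have : (m.divisors.filter (· ≤ s)) ⊆ Finset.Icc 1 s := by
      intro a ha
      obtain ⟨ha1, ha2⟩ := Finset.mem_filter.1 ha
      exact Finset.mem_Icc.2 ⟨Nat.pos_of_mem_divisors ha1, ha2⟩
    simpa using Finset.card_le_card this
  calc (Nat.divisors m).card ≤ _ := Finset.card_le_card hsub
    _ ≤ _ + _ := Finset.card_union_le _ _
    _ ≤ s + s := by
        have := Finset.card_image_le (s := m.divisors.filter (· ≤ s)) (f := (m / ·))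
        omega
    _ = 2 * s := by ring

lemma factor_bound_aux {w : ℂ} (hw : ‖w‖ ≤ 1) :
    ‖(1 + w) * Complex.exp (-w) - 1‖ ≤ 3 * ‖w‖ ^ 2 := by
  have h1 : (1 + w) * Complex.exp (-w) - 1
      = (Complex.exp (-w) - 1 - (-w)) + w * (Complex.exp (-w) - 1) := by ring
  have hw' : ‖-w‖ ≤ 1 := by rwa [norm_neg]
  have h2 := Complex.norm_exp_sub_one_sub_id_le hw'
  have h3 := Complex.norm_exp_sub_one_le hw'
  rw [h1]
  calc ‖(Complex.exp (-w) - 1 - (-w)) + w * (Complex.exp (-w) - 1)‖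
      ≤ ‖Complex.exp (-w) - 1 - (-w)‖ + ‖w * (Complex.exp (-w) - 1)‖ := norm_add_le _ _
    _ ≤ ‖-w‖ ^ 2 + ‖w‖ * (2 * ‖-w‖) := by
        rw [norm_mul]
        exact add_le_add h2 (mul_le_mul_of_nonneg_left h3 (norm_nonneg w))
    _ = 3 * ‖w‖ ^ 2 := by rw [norm_neg]; ring

lemma pow_sub_one_bound_aux (x : ℂ) (d : ℕ) : ‖x ^ d - 1‖ ≤ (1 + ‖x - 1‖) ^ d - 1 := by
  induction d with
  | zero => simp
  | succ d ih =>
    have hx : ‖x‖ ≤ 1 + ‖x - 1‖ := by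
      calc ‖x‖ = ‖1 + (x - 1)‖ := by ring_nf
        _ ≤ ‖(1:ℂ)‖ + ‖x - 1‖ := norm_add_le _ _
        _ = 1 + ‖x - 1‖ := by simp
    have key : x ^ (d + 1) - 1 = x ^ d * (x - 1) + (x ^ d - 1) := by ring
    calc ‖x ^ (d + 1) - 1‖ ≤ ‖x ^ d * (x - 1)‖ + ‖x ^ d - 1‖ := by
          rw [key]; exact norm_add_le _ _
      _ ≤ (1 + ‖x - 1‖) ^ d * ‖x - 1‖ + ((1 + ‖x - 1‖) ^ d - 1) := by
          refine add_le_add ?_ ih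
          rw [norm_mul, norm_pow]
          exact mul_le_mul_of_nonneg_right (pow_le_pow_left₀ (norm_nonneg x) hx d)
            (norm_nonneg _)
      _ = (1 + ‖x - 1‖) ^ (d + 1) - 1 := by ring

lemma multipliable_of_summable_norm_sub_one_aux {f : ℕ → ℂ}
    (h : Summable fun n => ‖f n - 1‖) : Multipliable f := by
  by_cases hz : ∃ n, f n = 0
  · obtain ⟨n₀, h0⟩ := hz
    refine ⟨0, ?_⟩
    have hev : ∀ᶠ s in Filter.atTop, (0:ℂ) = ∏ i ∈ s, f i := by
      filter_upwards [Filter.eventually_ge_atTop ({n₀} : Finset ℕ)] with s hs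
      exact (Finset.prod_eq_zero (hs (Finset.mem_singleton_self n₀)) h0).symm
    exact Filter.Tendsto.congr' hev tendsto_const_nhds
  · push_neg at hz
    refine Complex.multipliable_of_summable_log ?_
    have htend : Filter.Tendsto (fun n => ‖f n - 1‖) Filter.atTop (nhds 0) :=
      h.tendsto_atTop_zero
    have hev : ∀ᶠ n in Filter.cofinite, ‖f n - 1‖ ≤ 1 / 2 := by
      rw [Nat.cofinite_eq_atTop]
      exact htend.eventually_le_const (by norm_num)
    refine Summable.of_norm_bounded_eventually (g := fun n => 3 / 2 * ‖f n - 1‖) (h.mul_left _) ?_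
    filter_upwards [hev] with n hn
    have : Complex.log (f n) = Complex.log (1 + (f n - 1)) := by ring_nf
    rw [this]
    exact Complex.norm_log_one_add_half_le_self hn

lemma summable_comp_aux (K : ℝ) :
    Summable (fun n : ℕ => K * (Real.sqrt ((n:ℝ) + 1) / ((n:ℝ) + 1) ^ 2)) := by
  refine Summable.mul_left K ?_
  have h : Summable (fun n : ℕ => 1 / (n:ℝ) ^ (3/2 : ℝ)) :=
    Real.summable_one_div_nat_rpow.2 (by norm_num)
  have h2 : Summable (fun n : ℕ => 1 / ((n:ℝ) + 1) ^ (3/2 : ℝ)) := by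
    have := (summable_nat_add_iff 1).2 h
    simpa using this
  refine h2.congr fun n => ?_
  have hx : (0:ℝ) < (n:ℝ) + 1 := by positivity
  rw [Real.sqrt_eq_rpow]
  rw [show ((n:ℝ) + 1) ^ 2 = ((n:ℝ) + 1) ^ ((2:ℕ):ℝ) by rw [Real.rpow_natCast]]
  rw [div_eq_div_iff (by positivity) (by positivity), ← Real.rpow_add hx, one_mul]
  norm_num

lemma exp_sub_one_le_mul_aux {s : ℝ} (hs : 0 ≤ s) : Real.exp s - 1 ≤ s * Real.exp s := by
  have h1 := Real.add_one_le_exp (-s)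
  have h2 : Real.exp (-s) * Real.exp s = 1 := by rw [← Real.exp_add]; simp
  nlinarith [Real.exp_pos s]

lemma weier_norm_bound_aux {z : ℂ} {n : ℕ} (hn : ‖z‖ ≤ (n:ℝ) + 1) :
    ‖((1 + z / ((n:ℂ) + 1)) * Complex.exp (-(z / ((n:ℂ) + 1)))) ^ (Nat.divisors (n + 1)).card - 1‖
      ≤ (6 * ‖z‖ ^ 2 * Real.exp (6 * ‖z‖ ^ 2)) * (Real.sqrt ((n:ℝ) + 1) / ((n:ℝ) + 1) ^ 2) := by
  have hm : ‖((n:ℂ) + 1)‖ = (n:ℝ) + 1 := by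
    rw [show ((n:ℂ) + 1) = ((n + 1 : ℕ) : ℂ) by push_cast; ring, Complex.norm_natCast]
    push_cast; ring
  have hnp : (0:ℝ) < (n:ℝ) + 1 := by positivity
  set w := z / ((n:ℂ) + 1) with hw
  have hwn : ‖w‖ = ‖z‖ / ((n:ℝ) + 1) := by rw [hw, norm_div, hm]
  have hw1 : ‖w‖ ≤ 1 := by rw [hwn]; exact div_le_one_of_le₀ hn hnp.le
  have hw2 : ‖w‖ ^ 2 = ‖z‖ ^ 2 / ((n:ℝ) + 1) ^ 2 := by rw [hwn, div_pow]
  set d := (Nat.divisors (n + 1)).card with hdd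
  have hd : (d:ℝ) ≤ 2 * Real.sqrt ((n:ℝ) + 1) := by
    have h1 : d ≤ 2 * Nat.sqrt (n + 1) := card_divisors_le_aux (n + 1)
    have h2 : ((Nat.sqrt (n + 1) : ℝ)) ≤ Real.sqrt ((n:ℝ) + 1) := by
      rw [show ((n:ℝ) + 1) = ((n + 1 : ℕ) : ℝ) by push_cast; ring]
      exact Real.nat_sqrt_le_real_sqrt
    calc (d:ℝ) ≤ (2 * Nat.sqrt (n + 1) : ℕ) := by exact_mod_cast h1
      _ = 2 * (Nat.sqrt (n + 1) : ℝ) := by push_cast; ring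
      _ ≤ 2 * Real.sqrt ((n:ℝ) + 1) := by linarith
  set ε := ‖(1 + w) * Complex.exp (-w) - 1‖ with hε
  have hεb : ε ≤ 3 * ‖w‖ ^ 2 := factor_bound_aux hw1
  have hε0 : 0 ≤ ε := norm_nonneg _
  set s := (d:ℝ) * ε with hs
  set t := 6 * ‖z‖ ^ 2 * (Real.sqrt ((n:ℝ) + 1) / ((n:ℝ) + 1) ^ 2) with ht
  have hs0 : 0 ≤ s := by positivity
  have hst : s ≤ t := by
    have : s ≤ (2 * Real.sqrt ((n:ℝ) + 1)) * (3 * (‖z‖ ^ 2 / ((n:ℝ) + 1) ^ 2)) := by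
      rw [hs]
      exact mul_le_mul hd (hw2 ▸ hεb) hε0 (by positivity)
    calc s ≤ _ := this
      _ = t := by rw [ht]; ring
  have hsqle : Real.sqrt ((n:ℝ) + 1) ≤ ((n:ℝ) + 1) ^ 2 := by
    nlinarith [Real.sq_sqrt hnp.le, Real.sqrt_nonneg ((n:ℝ) + 1),
      sq_nonneg (Real.sqrt ((n:ℝ) + 1) - 1), sq_nonneg (Real.sqrt ((n:ℝ) + 1) + 1)]
  have htK : t ≤ 6 * ‖z‖ ^ 2 := by
    rw [ht]
    have : Real.sqrt ((n:ℝ) + 1) / ((n:ℝ) + 1) ^ 2 ≤ 1 := div_le_one_of_le₀ hsqle (by positivity)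
    nlinarith [sq_nonneg ‖z‖]
  have hexp : Real.exp s ≤ Real.exp (6 * ‖z‖ ^ 2) := Real.exp_le_exp.2 (hst.trans htK)
  calc ‖((1 + w) * Complex.exp (-w)) ^ d - 1‖
      ≤ (1 + ε) ^ d - 1 := pow_sub_one_bound_aux _ d
    _ ≤ Real.exp s - 1 := by
        have h1 : (1 + ε) ^ d ≤ (Real.exp ε) ^ d :=
          pow_le_pow_left₀ (by positivity) (by linarith [Real.add_one_le_exp ε]) d
        rw [hs, ← Real.exp_nat_mul] at *
        linarith
    _ ≤ s * Real.exp s := exp_sub_one_le_mul_aux hs0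
    _ ≤ t * Real.exp (6 * ‖z‖ ^ 2) :=
        mul_le_mul hst hexp (Real.exp_pos s).le (le_trans hs0 hst)
    _ = (6 * ‖z‖ ^ 2 * Real.exp (6 * ‖z‖ ^ 2)) * (Real.sqrt ((n:ℝ) + 1) / ((n:ℝ) + 1) ^ 2) := by
        rw [ht]; ring

lemma weier_multipliable_aux (z : ℂ) :
    Multipliable (fun n : ℕ => ((1 + z / ((n:ℂ) + 1)) *
      Complex.exp (-(z / ((n:ℂ) + 1)))) ^ (Nat.divisors (n + 1)).card) := by
  apply multipliable_of_summable_norm_sub_one_aux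
  refine Summable.of_norm_bounded_eventually
    (summable_comp_aux (6 * ‖z‖ ^ 2 * Real.exp (6 * ‖z‖ ^ 2))) ?_
  rw [Nat.cofinite_eq_atTop]
  filter_upwards [Filter.eventually_ge_atTop ⌈‖z‖⌉₊] with n hn
  rw [Real.norm_of_nonneg (norm_nonneg _)]
  apply weier_norm_bound_aux
  calc ‖z‖ ≤ (⌈‖z‖⌉₊ : ℝ) := Nat.le_ceil _
    _ ≤ (n : ℝ) := by exact_mod_cast hn
    _ ≤ (n : ℝ) + 1 := by linarith

lemma weier_pointwise_aux (k : ℂ) (n : ℕ) :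
    ((1 + (Complex.I * k) / ((n:ℂ) + 1)) *
        Complex.exp (-((Complex.I * k) / ((n:ℂ) + 1)))) ^ (Nat.divisors (n + 1)).card *
      ((1 + (-(Complex.I * k)) / ((n:ℂ) + 1)) *
        Complex.exp (-((-(Complex.I * k)) / ((n:ℂ) + 1)))) ^ (Nat.divisors (n + 1)).card
    = (1 + k ^ 2 / ((n:ℂ) + 1) ^ 2) ^ (Nat.divisors (n + 1)).card := by
  rw [← mul_pow]
  congr 1
  have hexp : Complex.exp (-((Complex.I * k) / ((n:ℂ) + 1))) *
      Complex.exp (-((-(Complex.I * k)) / ((n:ℂ) + 1))) = 1 := by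
    rw [← Complex.exp_add,
      show -((Complex.I * k) / ((n:ℂ) + 1)) + -((-(Complex.I * k)) / ((n:ℂ) + 1)) = 0 by ring,
      Complex.exp_zero]
  calc (1 + (Complex.I * k) / ((n:ℂ) + 1)) *
        Complex.exp (-((Complex.I * k) / ((n:ℂ) + 1))) *
      ((1 + (-(Complex.I * k)) / ((n:ℂ) + 1)) *
        Complex.exp (-((-(Complex.I * k)) / ((n:ℂ) + 1))))
      = ((1 + (Complex.I * k) / ((n:ℂ) + 1)) * (1 + (-(Complex.I * k)) / ((n:ℂ) + 1))) *
        (Complex.exp (-((Complex.I * k) / ((n:ℂ) + 1))) *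
          Complex.exp (-((-(Complex.I * k)) / ((n:ℂ) + 1)))) := by ring
    _ = 1 + k ^ 2 / ((n:ℂ) + 1) ^ 2 := by
        rw [hexp, mul_one]
        have hm : ((n:ℂ) + 1) ≠ 0 := by
          intro h
          have := congrArg Complex.re h
          simp at this
          linarith [Nat.cast_nonneg (α := ℝ) n]
        field_simp
        linear_combination (-(k ^ 2)) * Complex.I_sq

/-- The reciprocal `1/Γ̃` of the generalized gamma function, defined by its
Weierstrass product with `γ̃ = γ² - 2γ₁`. -/
noncomputable def recipGammaTilde (γ₁ : ℝ) (k : ℂ) : ℂ :=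
  Complex.exp (((Real.eulerMascheroniConstant ^ 2 - 2 * γ₁ : ℝ) : ℂ) * k) *
    ∏' n : ℕ, ((1 + k / ((n : ℂ) + 1)) *
        Complex.exp (-(k / ((n : ℂ) + 1)))) ^ (Nat.divisors (n + 1)).card

/-- The generalized gamma function `Γ̃`. -/
noncomputable def gammaTilde (γ₁ : ℝ) (k : ℂ) : ℂ := (recipGammaTilde γ₁ k)⁻¹

/-- The secular determinant satisfies `D(k²) = (1/2π) · 1/(Γ̃(ik) Γ̃(-ik))` for all `k ∈ ℂ`. -/
theorem secular_determinant_gammaTilde (γ₁ : ℝ)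
    (hγ₁ : Tendsto (fun m : ℕ =>
        (∑ l ∈ Finset.Icc 1 m, Real.log l / l) - (Real.log m) ^ 2 / 2) atTop (nhds γ₁))
    (k : ℂ) :
    (1 / (2 * (Real.pi : ℂ))) *
        ∏' n : ℕ, (1 + k ^ 2 / ((n : ℂ) + 1) ^ 2) ^ (Nat.divisors (n + 1)).card
      = (1 / (2 * (Real.pi : ℂ))) *
          (gammaTilde γ₁ (Complex.I * k) * gammaTilde γ₁ (-(Complex.I * k)))⁻¹ := by
  congr 1
  rw [gammaTilde, gammaTilde, mul_inv, inv_inv, inv_inv, recipGammaTilde, recipGammaTilde]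
  rw [mul_mul_mul_comm, ← Complex.exp_add,
    show ((Real.eulerMascheroniConstant ^ 2 - 2 * γ₁ : ℝ) : ℂ) * (Complex.I * k) +
        ((Real.eulerMascheroniConstant ^ 2 - 2 * γ₁ : ℝ) : ℂ) * (-(Complex.I * k)) = 0 by ring,
    Complex.exp_zero, one_mul]
  rw [← Multipliable.tprod_mul (weier_multipliable_aux (Complex.I * k))
    (weier_multipliable_aux (-(Complex.I * k)))]
  exact (tprod_congr (weier_pointwise_aux k)).symm
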